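/- arXiv:2003.06210 — 5 statements merged into one kernel-verified Lean document; each statement's English description precedes it below -/
import Mathlib

section
/- For any n×n complex symmetric Laplacian matrix Y (i.e., Y = Yᵀ and Y·1ₙ = 0ₙ), there exists a unique (n(n+1)/2) × (n(n-1)/2) matrix T, depending only on n, such that vech(Y) = T · ve(Y), where ve(Y) is the vector of negated strictly-below-diagonal entries of Y. -/
open Matrix

/-- Index set for half-vectorization: pairs `(i, j)` with `j ≤ i`. -/
def vechIdx (n : ℕ) := {p : Fin n × Fin n // p.2 ≤ p.1}

instance (n : ℕ) : Fintype (vechIdx n) := by unfold vechIdx; infer_instance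

/-- Index set for `ve`: pairs `(i, j)` with `j < i` (strictly below diagonal),
of cardinality `n(n-1)/2`. -/
def veIdx (n : ℕ) := {p : Fin n × Fin n // p.2 < p.1}

instance (n : ℕ) : Fintype (veIdx n) := by unfold veIdx; infer_instance

/-- Half-vectorization: the entries `Y i j` with `i ≥ j`. -/
def vech {n : ℕ} (Y : Matrix (Fin n) (Fin n) ℂ) : vechIdx n → ℂ :=
  fun p => Y p.1.1 p.1.2

/-- Negated strictly-below-diagonal entries: `−Y i j` for `i > j`. -/
def ve {n : ℕ} (Y : Matrix (Fin n) (Fin n) ℂ) : veIdx n → ℂ :=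
  fun p => -Y p.1.1 p.1.2

instance (n : ℕ) : DecidableEq (veIdx n) := by unfold veIdx; infer_instance

lemma sum_veIdx {n : ℕ} (f : Fin n × Fin n → ℂ) :
    ∑ q : veIdx n, f q.1 = ∑ a : Fin n, ∑ b : Fin n, if b < a then f (a, b) else 0 := by
  rw [show (∑ a : Fin n, ∑ b : Fin n, if b < a then f (a, b) else 0)
      = ∑ r : Fin n × Fin n, (if r.2 < r.1 then f r else 0) from
    (Fintype.sum_prod_type (f := fun r : Fin n × Fin n => if r.2 < r.1 then f r else 0)).symm]
  rw [← Finset.sum_filter]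
  exact (Finset.sum_subtype _ (by simp) f).symm

/-- The canonical transformation matrix. -/
def Tmat (n : ℕ) : Matrix (vechIdx n) (veIdx n) ℂ :=
  fun p q => if p.1.2 < p.1.1 then (if q.1 = p.1 then -1 else 0)
      else (if q.1.1 = p.1.1 ∨ q.1.2 = p.1.1 then 1 else 0)

/-- A basis symmetric Laplacian supported on indices `a, b`. -/
def basisY {n : ℕ} (a b : Fin n) : Matrix (Fin n) (Fin n) ℂ :=
  fun x y => (if (x = a ∧ y = b) ∨ (x = b ∧ y = a) then -1 else 0)
    + (if (x = a ∧ y = a) ∨ (x = b ∧ y = b) then 1 else 0)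

lemma basisY_symm {n : ℕ} (a b : Fin n) : basisY a b = (basisY a b)ᵀ := by
  funext x y
  simp only [basisY, Matrix.transpose_apply]
  by_cases h1 : x = a <;> by_cases h2 : x = b <;>
    by_cases h3 : y = a <;> by_cases h4 : y = b <;> simp_all

lemma basisY_laplacian {n : ℕ} (a b : Fin n) (hab : b ≠ a) :
    (basisY a b).mulVec 1 = 0 := by
  funext x
  simp only [Matrix.mulVec, dotProduct, Pi.one_apply, mul_one, Pi.zero_apply, basisY]
  rw [Finset.sum_add_distrib]
  have s1 : ∑ y : Fin n, (if (x = a ∧ y = b) ∨ (x = b ∧ y = a) then (-1:ℂ) else 0)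
      = (if x = a then -1 else 0) + (if x = b then -1 else 0) := by
    have key : ∀ y : Fin n, (if (x = a ∧ y = b) ∨ (x = b ∧ y = a) then (-1:ℂ) else 0)
        = (if y = b then (if x = a then -1 else 0) else 0)
          + (if y = a then (if x = b then -1 else 0) else 0) := by
      intro y
      by_cases h1 : x = a <;> by_cases h2 : x = b <;>
        by_cases h3 : y = a <;> by_cases h4 : y = b <;> simp_all
    rw [Finset.sum_congr rfl (fun y _ => key y), Finset.sum_add_distrib,
      Finset.sum_ite_eq' Finset.univ b, Finset.sum_ite_eq' Finset.univ a]
    simp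
  have s2 : ∑ y : Fin n, (if (x = a ∧ y = a) ∨ (x = b ∧ y = b) then (1:ℂ) else 0)
      = (if x = a then 1 else 0) + (if x = b then 1 else 0) := by
    have key : ∀ y : Fin n, (if (x = a ∧ y = a) ∨ (x = b ∧ y = b) then (1:ℂ) else 0)
        = (if y = a then (if x = a then 1 else 0) else 0)
          + (if y = b then (if x = b then 1 else 0) else 0) := by
      intro y
      by_cases h1 : x = a <;> by_cases h2 : x = b <;>
        by_cases h3 : y = a <;> by_cases h4 : y = b <;> simp_all
    rw [Finset.sum_congr rfl (fun y _ => key y), Finset.sum_add_distrib,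
      Finset.sum_ite_eq' Finset.univ a, Finset.sum_ite_eq' Finset.univ b]
    simp
  rw [s1, s2]
  rcases eq_or_ne x a with h1 | h1
  · have h2 : x ≠ b := by rintro rfl; exact hab h1
    simp [h1, h2, Ne.symm hab]
  · rcases eq_or_ne x b with h2 | h2
    · simp [h1, h2, hab]
    · simp [h1, h2]

lemma ve_basisY {n : ℕ} (a b : Fin n) (hba : b < a) :
    ve (basisY a b) = Pi.single (ι := veIdx n) (⟨(a, b), hba⟩ : veIdx n) 1 := by
  funext q'
  by_cases hq : q' = (⟨(a, b), hba⟩ : veIdx n)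
  · subst hq
    erw [Pi.single_eq_same]
    simp [ve, basisY, hba.ne, hba.ne']
  · erw [Pi.single_eq_of_ne hq]
    obtain ⟨⟨x, y⟩, hyx⟩ := q'
    simp only [ve, basisY]
    have hne : ¬((x = a ∧ y = b) ∨ (x = b ∧ y = a)) := by
      rintro (⟨h1, h2⟩ | ⟨h1, h2⟩)
      · exact hq (by subst h1; subst h2; rfl)
      · subst h1; subst h2; exact absurd (hyx.trans hba) (lt_irrefl _)
    have hne2 : ¬((x = a ∧ y = a) ∨ (x = b ∧ y = b)) := by
      rintro (⟨h1, h2⟩ | ⟨h1, h2⟩) <;>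
        (subst h1; subst h2; exact absurd hyx (lt_irrefl _))
    simp [hne, hne2]

lemma Tmat_works {n : ℕ} (Y : Matrix (Fin n) (Fin n) ℂ) (hsym : Y = Yᵀ)
    (hL : Y.mulVec 1 = 0) : vech Y = (Tmat n).mulVec (ve Y) := by
  have hS : ∀ a b, Y a b = Y b a := by
    intro a b; nth_rewrite 1 [hsym]; rfl
  have hR : ∀ i : Fin n, ∑ k, Y i k = 0 := by
    intro i
    have := congrFun hL i
    simpa [Matrix.mulVec, dotProduct] using this
  funext p
  simp only [Matrix.mulVec, dotProduct, vech, ve, Tmat]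
  by_cases h : p.1.2 < p.1.1
  · simp only [if_pos h]
    have key : ∀ q : veIdx n,
        (if q.1 = p.1 then (-1:ℂ) else 0) * (-Y q.1.1 q.1.2)
        = if q = (show veIdx n from ⟨p.1, h⟩) then Y p.1.1 p.1.2 else 0 := by
      intro q
      by_cases hq : q = (⟨p.1, h⟩ : veIdx n)
      · subst hq; simp; exact fun hh => absurd rfl hh
      · have h2 : q.1 ≠ p.1 := fun hh => hq (Subtype.ext hh)
        simp [hq, h2]
    rw [Finset.sum_congr rfl (fun q _ => key q), Finset.sum_ite_eq' Finset.univ]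
    simp; exact fun hh => absurd (Finset.mem_univ _) hh
  · simp only [if_neg h]
    have hii : p.1.2 = p.1.1 := le_antisymm p.2 (not_lt.mp h)
    set i := p.1.1 with hi
    rw [hii]
    have hsub := sum_veIdx (n := n)
      (fun r => (if r.1 = i ∨ r.2 = i then (1:ℂ) else 0) * (-Y r.1 r.2))
    rw [hsub]
    have step : ∀ a b : Fin n,
        (if (b < a) then (if (a, b).1 = i ∨ (a, b).2 = i then (1:ℂ) else 0)
            * (-Y (a, b).1 (a, b).2) else 0)
        = (if a = i then (if b < a then -Y a b else 0) else 0)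
          + (if b = i then (if b < a then -Y a b else 0) else 0) := by
      intro a b
      by_cases hb : b < a
      · by_cases ha : a = i
        · have hne : ¬ b = i := by
            intro hbe; rw [ha, ← hbe] at hb; exact absurd hb (lt_irrefl _)
          simp [hb, ha, hne]
        · by_cases hbe : b = i <;> simp [hb, ha, hbe]
      · simp [hb]
    rw [Finset.sum_congr rfl (fun a _ =>
      Finset.sum_congr rfl (fun b _ => step a b))]
    simp only [Finset.sum_add_distrib]
    have e1 : ∑ a : Fin n, ∑ b : Fin n,
        (if a = i then (if b < a then -Y a b else 0) else 0)
        = ∑ b : Fin n, (if b < i then -Y i b else 0) := by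
      have pull : ∀ a : Fin n, ∑ b : Fin n,
          (if a = i then (if b < a then -Y a b else 0) else 0)
          = if a = i then (∑ b : Fin n, if b < a then -Y a b else 0) else 0 := by
        intro a; by_cases ha : a = i <;> simp [ha]
      rw [Finset.sum_congr rfl (fun a _ => pull a),
        Finset.sum_ite_eq' Finset.univ i
          (fun a => ∑ b : Fin n, if b < a then -Y a b else 0)]
      simp
    have e2 : ∑ a : Fin n, ∑ b : Fin n,
        (if b = i then (if b < a then -Y a b else 0) else 0)
        = ∑ a : Fin n, (if i < a then -Y i a else 0) := by
      rw [Finset.sum_comm]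
      have pull : ∀ b : Fin n, ∑ a : Fin n,
          (if b = i then (if b < a then -Y a b else 0) else 0)
          = if b = i then (∑ a : Fin n, if b < a then -Y a b else 0) else 0 := by
        intro b; by_cases hb : b = i <;> simp [hb]
      rw [Finset.sum_congr rfl (fun b _ => pull b),
        Finset.sum_ite_eq' Finset.univ i
          (fun b => ∑ a : Fin n, if b < a then -Y a b else 0)]
      simp only [Finset.mem_univ, if_true]
      exact Finset.sum_congr rfl (fun a _ => by
        by_cases ha : i < a <;> simp [ha, hS a i])
    rw [e1, e2]
    have comb : ∀ k : Fin n,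
        (if k < i then -Y i k else 0) + (if i < k then -Y i k else 0)
        = -Y i k + (if k = i then Y i k else 0) := by
      intro k
      rcases lt_trichotomy k i with hk | hk | hk
      · simp [hk, not_lt.mpr hk.le, hk.ne]
      · simp [hk]
      · simp [hk, not_lt.mpr hk.le, hk.ne']
    rw [← Finset.sum_add_distrib,
      Finset.sum_congr rfl (fun k _ => comb k),
      Finset.sum_add_distrib, Finset.sum_ite_eq' Finset.univ i (fun k => Y i k)]
    have hz : ∑ k : Fin n, -Y i k = 0 := by simp [hR i]
    rw [hz]
    simp

/-- Existence and uniqueness of the transformation matrix `T`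
(an `n(n+1)/2 × n(n-1)/2` matrix depending only on `n`) with
`vech Y = T • ve Y` for every symmetric Laplacian `Y`. -/
theorem transformation_matrix_exists_unique (n : ℕ) :
    ∃! T : Matrix (vechIdx n) (veIdx n) ℂ,
      ∀ Y : Matrix (Fin n) (Fin n) ℂ, Y = Yᵀ → Y.mulVec 1 = 0 →
        vech Y = T.mulVec (ve Y) := by
  refine ⟨Tmat n, fun Y hsym hL => Tmat_works Y hsym hL, ?_⟩
  intro T' hT'
  funext p q
  obtain ⟨⟨a, b⟩, hba⟩ := q
  have hab : b ≠ a := ne_of_lt hba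
  have h1 := hT' (basisY a b) (basisY_symm a b) (basisY_laplacian a b hab)
  have h2 := Tmat_works (basisY a b) (basisY_symm a b) (basisY_laplacian a b hab)
  have h3 := congrFun (h1.symm.trans h2) p
  erw [ve_basisY a b hba, Matrix.mulVec_single, Matrix.mulVec_single] at h3
  simp at h3; exact h3
end

section
/- Let Z₋ ∈ ℂ^{m×m} be Hermitian positive definite, A ∈ ℂ^{n×m}, λ ∈ (0,1], and Z = (λ Z₋⁻¹ + Aᴴ A)⁻¹. Then Iₙ − A Z Aᴴ is Hermitian positive semidefinite. -/
open Matrix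
open scoped ComplexOrder

lemma posDef_smul_complex {m : ℕ} {M : Matrix (Fin m) (Fin m) ℂ} (hM : M.PosDef)
    {l : ℝ} (hl : 0 < l) : ((l : ℂ) • M).PosDef := by
  refine ⟨?_, fun x hx => ?_⟩
  · unfold Matrix.IsHermitian
    rw [conjTranspose_smul, hM.1.eq]
    congr 1
    simp
  · exact (hM.smul (by exact_mod_cast hl : (0 : ℂ) < (l : ℂ))).2 hx

/-- With `Z = (λ Z₋⁻¹ + Aᴴ A)⁻¹`, `Z₋` Hermitian positive definite and
`λ ∈ (0,1]`, the matrix `Iₙ − A Z Aᴴ` is Hermitian positive semidefinite. -/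
theorem one_sub_AZAH_posSemidef {m n : ℕ}
    (Zm : Matrix (Fin m) (Fin m) ℂ) (hZm : Zm.PosDef)
    (A : Matrix (Fin n) (Fin m) ℂ) (l : ℝ) (hl0 : 0 < l) (hl1 : l ≤ 1)
    (Z : Matrix (Fin m) (Fin m) ℂ)
    (hZ : Z = ((l : ℂ) • Zm⁻¹ + Aᴴ * A)⁻¹) :
    ((1 : Matrix (Fin n) (Fin n) ℂ) - A * Z * Aᴴ).PosSemidef := by
  set C : Matrix (Fin m) (Fin m) ℂ := (l : ℂ) • Zm⁻¹ with hC
  set B : Matrix (Fin m) (Fin m) ℂ := C + Aᴴ * A with hB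
  have hCpd : C.PosDef := posDef_smul_complex hZm.inv hl0
  have hBpd : B.PosDef := hCpd.add_posSemidef (posSemidef_conjTranspose_mul_self A)
  -- Woodbury: (1 + A * C⁻¹ * Aᴴ) * (1 - A * B⁻¹ * Aᴴ) = 1
  have hBB : B * B⁻¹ = 1 := mul_nonsing_inv B (isUnit_iff_isUnit_det B |>.mp hBpd.isUnit)
  have hCC : C⁻¹ * C = 1 := nonsing_inv_mul C (isUnit_iff_isUnit_det C |>.mp hCpd.isUnit)
  have key : ((1 : Matrix (Fin n) (Fin n) ℂ) + A * C⁻¹ * Aᴴ) * (1 - A * B⁻¹ * Aᴴ) = 1 := by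
    have hAA : Aᴴ * A = B - C := (add_sub_cancel_left C (Aᴴ * A)).symm
    have hPQ : A * C⁻¹ * Aᴴ * (A * B⁻¹ * Aᴴ) = A * C⁻¹ * Aᴴ - A * B⁻¹ * Aᴴ := by
      have e0 : A * C⁻¹ * Aᴴ * (A * B⁻¹ * Aᴴ) = A * (C⁻¹ * ((Aᴴ * A) * (B⁻¹ * Aᴴ))) := by
        simp only [Matrix.mul_assoc]
      rw [e0, hAA, Matrix.sub_mul, ← Matrix.mul_assoc B, hBB, Matrix.one_mul,
        Matrix.mul_sub, Matrix.mul_sub, ← Matrix.mul_assoc C⁻¹ C, hCC, Matrix.one_mul]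
      simp only [Matrix.mul_sub, Matrix.mul_assoc]
    have expand : ∀ P Q : Matrix (Fin n) (Fin n) ℂ,
        (1 + P) * (1 - Q) = 1 + P - Q - P * Q := by intro P Q; noncomm_ring
    rw [expand, hPQ]
    abel
  have hinv : ((1 : Matrix (Fin n) (Fin n) ℂ) + A * C⁻¹ * Aᴴ)⁻¹
      = 1 - A * B⁻¹ * Aᴴ := inv_eq_right_inv key
  have hpd : ((1 : Matrix (Fin n) (Fin n) ℂ) + A * C⁻¹ * Aᴴ).PosDef := by
    have h1 : (1 : Matrix (Fin n) (Fin n) ℂ).PosDef := Matrix.PosDef.one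
    exact h1.add_posSemidef ((hCpd.inv.posSemidef).mul_mul_conjTranspose_same A)
  have : ((1 : Matrix (Fin n) (Fin n) ℂ) - A * B⁻¹ * Aᴴ).PosDef := hinv ▸ hpd.inv
  rw [hZ]
  exact this.posSemidef
end

section
/- Lyapunov decrease for noise-free RLS: with the setup of the noise-free RLS error recursion (x̃_t = x̃_{t−1} − Z_t A_tᴴ A_t x̃_{t−1}, Z_t = (λ Z_{t−1}⁻¹ + A_tᴴ A_t)⁻¹), define ε_t := A_t x̃_{t−1} and W_t := x̃_tᴴ Z_t⁻¹ x̃_t. Then W_t = λ W_{t−1} − ε_tᴴ (Iₙ − A_t Z_t A_tᴴ) ε_t. -/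
open Matrix
open scoped ComplexOrder

private lemma rls_smul_posdef {k : ℕ} (P : Matrix (Fin k) (Fin k) ℂ) (hP : P.PosDef)
    (l : ℝ) (hl : 0 < l) : ((l : ℂ) • P).PosDef := by
  refine ⟨?_, fun x hx => ?_⟩
  · unfold Matrix.IsHermitian
    rw [conjTranspose_smul, hP.1.eq]
    norm_num
  · exact (hP.smul (a := (l : ℂ)) (by exact_mod_cast hl)).2 hx

/-- Exact one-step evolution of the Lyapunov-like function for noise-free RLS:
with `ε_t = A_t x̃_{t−1}` and `W_t = x̃_tᴴ Z_t⁻¹ x̃_t`,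
`W_t = λ W_{t−1} − ε_tᴴ (Iₙ − A_t Z_t A_tᴴ) ε_t`. -/
theorem rls_lyapunov_identity {m n : ℕ} (x : Fin m → ℂ)
    (A : ℕ → Matrix (Fin n) (Fin m) ℂ)
    (Z : ℕ → Matrix (Fin m) (Fin m) ℂ)
    (xhat : ℕ → (Fin m → ℂ))
    (l : ℝ) (hl0 : 0 < l) (hl1 : l ≤ 1)
    (hZ0 : (Z 0).PosDef)
    (hZ : ∀ t : ℕ, Z (t + 1) = ((l : ℂ) • (Z t)⁻¹ + (A (t + 1))ᴴ * A (t + 1))⁻¹)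
    (hx : ∀ t : ℕ, xhat (t + 1) = xhat t +
      (Z (t + 1) * (A (t + 1))ᴴ).mulVec ((A (t + 1)).mulVec x - (A (t + 1)).mulVec (xhat t))) :
    ∀ t : ℕ,
      star (xhat (t + 1) - x) ⬝ᵥ (Z (t + 1))⁻¹.mulVec (xhat (t + 1) - x) =
        (l : ℂ) * (star (xhat t - x) ⬝ᵥ (Z t)⁻¹.mulVec (xhat t - x)) -
          star ((A (t + 1)).mulVec (xhat t - x)) ⬝ᵥ
            (((1 : Matrix (Fin n) (Fin n) ℂ) - A (t + 1) * Z (t + 1) * (A (t + 1))ᴴ).mulVec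
              ((A (t + 1)).mulVec (xhat t - x))) := by
  -- positive definiteness of all Z t
  have key : ∀ t : ℕ, (Z t).PosDef := by
    intro t
    induction t with
    | zero => exact hZ0
    | succ t ih =>
      rw [hZ t]
      exact ((rls_smul_posdef _ ih.inv l hl0).add_posSemidef
        (posSemidef_conjTranspose_mul_self _)).inv
  intro t
  set A1 := A (t + 1) with hA1
  set Zi := (Z t)⁻¹ with hZi
  set B := A1ᴴ * A1 with hB
  set M := (l : ℂ) • Zi + B with hMdef
  have hMpd : M.PosDef :=
    (rls_smul_posdef _ (key t).inv l hl0).add_posSemidef (posSemidef_conjTranspose_mul_self _)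
  have hMdet : IsUnit M.det := hMpd.det_pos.ne'.isUnit
  have hZt1 : Z (t + 1) = M⁻¹ := hZ t
  have hZinv : (Z (t + 1))⁻¹ = M := by
    rw [hZt1, Matrix.nonsing_inv_nonsing_inv _ hMdet]
  have hMZ : M * Z (t + 1) = 1 := by rw [hZt1]; exact Matrix.mul_nonsing_inv _ hMdet
  have hZM : Z (t + 1) * M = 1 := by rw [hZt1]; exact Matrix.nonsing_inv_mul _ hMdet
  set Zp := Z (t + 1) with hZp
  set e := xhat t - x with he
  -- error recursion
  have hx' : xhat (t + 1) - x = e - (Zp * B).mulVec e := by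
    rw [hx t]
    have h1 : A1.mulVec x - A1.mulVec (xhat t) = -(A1.mulVec e) := by
      rw [he, Matrix.mulVec_sub]; abel
    rw [h1, Matrix.mulVec_neg, Matrix.mulVec_mulVec]
    rw [show Zp * A1ᴴ * A1 = Zp * B by rw [hB, Matrix.mul_assoc]]
    rw [he]
    abel
  -- M applied to the new error
  have hMe : M.mulVec (e - (Zp * B).mulVec e) = ((l : ℂ) • Zi).mulVec e := by
    rw [Matrix.mulVec_sub, Matrix.mulVec_mulVec,
      show M * (Zp * B) = B by rw [← Matrix.mul_assoc, hMZ, Matrix.one_mul],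
      hMdef, Matrix.add_mulVec]
    abel
  -- Hermitian facts
  have hZiH : Ziᴴ = Zi := (key t).inv.1
  have hBH : Bᴴ = B := Matrix.isHermitian_conjTranspose_mul_self A1
  have hZpH : Zpᴴ = Zp := (key (t + 1)).1
  -- star of the correction term
  have hstar : star ((Zp * B).mulVec e) = star e ᵥ* (B * Zp) := by
    rw [Matrix.star_mulVec, Matrix.conjTranspose_mul, hBH, hZpH]
  -- LHS computation
  have hBZB : B * Zp * ((l : ℂ) • Zi) = B - B * Zp * B := by
    have h2 : (l : ℂ) • Zi = M - B := by rw [hMdef]; abel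
    rw [h2, Matrix.mul_sub, Matrix.mul_assoc B Zp M, hZM, Matrix.mul_one]
  have hLHS : star (xhat (t + 1) - x) ⬝ᵥ (Z (t + 1))⁻¹.mulVec (xhat (t + 1) - x) =
      (l : ℂ) * (star e ⬝ᵥ Zi.mulVec e) - star e ⬝ᵥ ((B - B * Zp * B).mulVec e) := by
    rw [hZinv, hx', hMe, star_sub, sub_dotProduct, hstar]
    congr 1
    · rw [smul_mulVec, dotProduct_smul, smul_eq_mul]
    · rw [Matrix.dotProduct_mulVec, Matrix.vecMul_vecMul, ← Matrix.dotProduct_mulVec, hBZB]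
  -- RHS computation
  have hRHS : star (A1.mulVec e) ⬝ᵥ
      (((1 : Matrix (Fin n) (Fin n) ℂ) - A1 * Zp * A1ᴴ).mulVec (A1.mulVec e)) =
      star e ⬝ᵥ ((B - B * Zp * B).mulVec e) := by
    rw [Matrix.star_mulVec, Matrix.dotProduct_mulVec, Matrix.vecMul_vecMul,
      Matrix.dotProduct_mulVec, Matrix.vecMul_vecMul, ← Matrix.dotProduct_mulVec]
    have hmat : A1ᴴ * ((1 : Matrix (Fin n) (Fin n) ℂ) - A1 * Zp * A1ᴴ) * A1 = B - B * Zp * B := by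
      rw [hB, Matrix.mul_sub, Matrix.mul_one, Matrix.sub_mul]
      simp [Matrix.mul_assoc]
    rw [hmat]
  rw [hLHS, hRHS]
end

section
/- For the noise-free RLS recursion with λ ∈ (0,1] and Z₀ Hermitian positive definite, the Lyapunov function W_t := x̃_tᴴ Z_t⁻¹ x̃_t satisfies W_t ≤ λ W_{t−1}, and hence W_t ≤ λᵗ W₀ for all t ≥ 0. -/
open Matrix
open scoped ComplexOrder

lemma aux_smul_posDef {k : ℕ} {M : Matrix (Fin k) (Fin k) ℂ} (hM : M.PosDef) {c : ℝ}
    (hc : 0 < c) : ((c : ℂ) • M).PosDef := by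
  exact hM.smul (a := (c : ℂ)) (by exact_mod_cast hc)

lemma aux_smul_posSemidef {k : ℕ} {M : Matrix (Fin k) (Fin k) ℂ} (hM : M.PosSemidef) {c : ℝ}
    (hc : 0 ≤ c) : ((c : ℂ) • M).PosSemidef := by
  exact hM.smul (a := (c : ℂ)) (by exact_mod_cast hc)

/-- Lyapunov decrease for noise-free RLS: `W_t ≤ λ W_{t−1}` and hence
`W_t ≤ λᵗ W₀` for all `t`, where `W_t = x̃_tᴴ Z_t⁻¹ x̃_t` (a real quantity). -/
theorem rls_lyapunov_decrease {m n : ℕ} (x : Fin m → ℂ)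
    (A : ℕ → Matrix (Fin n) (Fin m) ℂ)
    (Z : ℕ → Matrix (Fin m) (Fin m) ℂ)
    (xhat : ℕ → (Fin m → ℂ))
    (l : ℝ) (hl0 : 0 < l) (hl1 : l ≤ 1)
    (hZ0 : (Z 0).PosDef)
    (hZ : ∀ t : ℕ, Z (t + 1) = ((l : ℂ) • (Z t)⁻¹ + (A (t + 1))ᴴ * A (t + 1))⁻¹)
    (hx : ∀ t : ℕ, xhat (t + 1) = xhat t +
      (Z (t + 1) * (A (t + 1))ᴴ).mulVec ((A (t + 1)).mulVec x - (A (t + 1)).mulVec (xhat t)))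
    (W : ℕ → ℝ)
    (hW : ∀ t : ℕ, W t = (star (xhat t - x) ⬝ᵥ (Z t)⁻¹.mulVec (xhat t - x)).re) :
    (∀ t : ℕ, W (t + 1) ≤ l * W t) ∧ (∀ t : ℕ, W t ≤ l ^ t * W 0) := by
  have hPD : ∀ t, (Z t).PosDef := by
    intro t
    induction t with
    | zero => exact hZ0
    | succ t ih =>
      rw [hZ t]
      exact ((aux_smul_posDef ih.inv hl0).add_posSemidef
        (Matrix.posSemidef_conjTranspose_mul_self _)).inv
  have key : ∀ t, W (t + 1) ≤ l * W t := by
    intro t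
    set C := A (t + 1) with hC
    set Zt := Z t with hZt
    have hZtpd : Zt.PosDef := hPD t
    have hdt : IsUnit Zt.det := hZtpd.det_pos.ne'.isUnit
    set B := (l : ℂ) • Zt⁻¹ + Cᴴ * C with hB
    have hBpd : B.PosDef := (aux_smul_posDef hZtpd.inv hl0).add_posSemidef
      (Matrix.posSemidef_conjTranspose_mul_self _)
    have hdB : IsUnit B.det := hBpd.det_pos.ne'.isUnit
    have hZ1 : Z (t + 1) = B⁻¹ := hZ t
    set Z1 := B⁻¹ with hZ1'
    have hZ1pd : Z1.PosDef := hBpd.inv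
    have hZ1inv : Z1⁻¹ = B := Matrix.nonsing_inv_nonsing_inv _ hdB
    have hZ1B : Z1 * B = 1 := Matrix.nonsing_inv_mul _ hdB
    have hBZ1 : B * Z1 = 1 := Matrix.mul_nonsing_inv _ hdB
    set y := Zt⁻¹ *ᵥ (xhat t - x) with hy
    have hety : xhat t - x = Zt *ᵥ y := by
      rw [hy, Matrix.mulVec_mulVec, Matrix.mul_nonsing_inv _ hdt, Matrix.one_mulVec]
    have hmat : (1 : Matrix (Fin m) (Fin m) ℂ) - Z1 * (Cᴴ * C) = (l : ℂ) • (Z1 * Zt⁻¹) := by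
      have h := hZ1B
      rw [hB, mul_add, Matrix.mul_smul] at h
      rw [← h]; abel
    have het1 : xhat (t + 1) - x = (l : ℂ) • (Z1 *ᵥ y) := by
      rw [hx t, hZ1]
      have h1 : (Z1 * Cᴴ) *ᵥ (C *ᵥ x - C *ᵥ xhat t)
          = -((Z1 * (Cᴴ * C)) *ᵥ (xhat t - x)) := by
        simp only [← Matrix.mulVec_mulVec, Matrix.mulVec_sub, Matrix.mulVec_neg]
        abel
      rw [h1]
      have h2 : xhat t + -((Z1 * (Cᴴ * C)) *ᵥ (xhat t - x)) - x
          = ((1 : Matrix (Fin m) (Fin m) ℂ) - Z1 * (Cᴴ * C)) *ᵥ (xhat t - x) := by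
        rw [Matrix.sub_mulVec, Matrix.one_mulVec]; abel
      rw [h2, hmat, Matrix.smul_mulVec, ← Matrix.mulVec_mulVec]
    have hWt : W t = (star y ⬝ᵥ Zt *ᵥ y).re := by
      rw [hW t, ← hZt, ← hy, hety, Matrix.star_mulVec, ← Matrix.dotProduct_mulVec,
        hZtpd.isHermitian.eq]
    have hWt1 : W (t + 1) = l ^ 2 * (star y ⬝ᵥ Z1 *ᵥ y).re := by
      have hv : B *ᵥ ((l : ℂ) • (Z1 *ᵥ y)) = (l : ℂ) • y := by
        rw [Matrix.mulVec_smul, Matrix.mulVec_mulVec y B Z1, hBZ1, Matrix.one_mulVec]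
      rw [hW (t + 1), hZ1, hZ1inv, het1, hv]
      rw [star_smul, smul_dotProduct, dotProduct_smul, smul_eq_mul, smul_eq_mul]
      rw [Complex.star_def, Complex.conj_ofReal]
      rw [Matrix.star_mulVec, ← Matrix.dotProduct_mulVec, hZ1pd.isHermitian.eq]
      rw [Complex.re_ofReal_mul, Complex.re_ofReal_mul]
      ring
    have hq1 : 0 ≤ (star y ⬝ᵥ Z1 *ᵥ y).re := by
      simpa using hZ1pd.posSemidef.re_dotProduct_nonneg y
    have hCC : (Cᴴ * C).PosSemidef := Matrix.posSemidef_conjTranspose_mul_self C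
    have hMps : ((l : ℂ) • (Cᴴ * C) + (Cᴴ * C) * Zt * (Cᴴ * C)).PosSemidef := by
      refine (aux_smul_posSemidef hCC hl0.le).add ?_
      have h2 := hZtpd.posSemidef.conjTranspose_mul_mul_same (Cᴴ * C)
      rwa [hCC.isHermitian.eq] at h2
    have hM2 : B * Zt * B - (l : ℂ) • B
        = (l : ℂ) • (Cᴴ * C) + (Cᴴ * C) * Zt * (Cᴴ * C) := by
      have e1 : Zt⁻¹ * Zt = 1 := Matrix.nonsing_inv_mul _ hdt
      rw [hB]
      have e2 : Zt * Zt⁻¹ = 1 := Matrix.mul_nonsing_inv _ hdt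
      have e1' : ∀ X : Matrix (Fin m) (Fin m) ℂ, Zt⁻¹ * (Zt * X) = X := fun X => by
        rw [← mul_assoc, e1, Matrix.one_mul]
      have e2' : ∀ X : Matrix (Fin m) (Fin m) ℂ, Zt * (Zt⁻¹ * X) = X := fun X => by
        rw [← mul_assoc, e2, Matrix.one_mul]
      simp only [add_mul, mul_add, Matrix.smul_mul, Matrix.mul_smul, smul_add, smul_smul,
        mul_assoc, e1, e2, e1', e2', Matrix.one_mul, Matrix.mul_one, mul_one, one_mul]
      module
    have hDeq : Zt - (l : ℂ) • Z1
        = Z1ᴴ * ((l : ℂ) • (Cᴴ * C) + (Cᴴ * C) * Zt * (Cᴴ * C)) * Z1 := by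
      rw [hZ1pd.isHermitian.eq, ← hM2]
      rw [mul_sub, sub_mul, Matrix.mul_smul, Matrix.smul_mul]
      congr 1
      · refine Eq.symm ?_
        calc Z1 * (B * Zt * B) * Z1 = (Z1 * B) * (Zt * (B * Z1)) := by
              simp only [mul_assoc]
          _ = Zt := by rw [hZ1B, hBZ1, Matrix.one_mul, Matrix.mul_one]
      · rw [hZ1B, Matrix.one_mul]
    have hDps : (Zt - (l : ℂ) • Z1).PosSemidef := by
      rw [hDeq]; exact hMps.conjTranspose_mul_mul_same Z1
    have hkey : l * (star y ⬝ᵥ Z1 *ᵥ y).re ≤ (star y ⬝ᵥ Zt *ᵥ y).re := by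
      have h := hDps.re_dotProduct_nonneg y
      rw [Matrix.sub_mulVec, dotProduct_sub, Matrix.smul_mulVec, dotProduct_smul,
        smul_eq_mul] at h
      simp only [RCLike.re_to_complex, Complex.sub_re, Complex.re_ofReal_mul] at h
      linarith
    rw [hWt1, hWt]
    nlinarith [mul_le_mul_of_nonneg_left hkey hl0.le]
  refine ⟨key, ?_⟩
  intro t
  induction t with
  | zero => simp
  | succ t ih =>
    calc W (t + 1) ≤ l * W t := key t
      _ ≤ l * (l ^ t * W 0) := mul_le_mul_of_nonneg_left ih hl0.le
      _ = l ^ (t + 1) * W 0 := by ring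
end

section
/- Boundedness of RLS error: under the noise-free RLS recursion with λ ∈ (0,1] and Z₀ = Z₀ᴴ ≻ 0, the error satisfies x̃_tᴴ (Z₀⁻¹ + ∑_{i=1}^{t} A_iᴴ A_i) x̃_t ≤ W₀ for all t, where W₀ = x̃₀ᴴ Z₀⁻¹ x̃₀. In particular, μ·‖x̃_t‖² ≤ W₀ where μ > 0 is the smallest eigenvalue of Z₀⁻¹, so ‖x̃_t‖ is bounded uniformly in t. -/
open Matrix Finset
open scoped ComplexOrder

lemma re_dot_comm {k : ℕ} (a b : Fin k → ℂ) : (star a ⬝ᵥ b).re = (star b ⬝ᵥ a).re := by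
  simp only [dotProduct, Complex.re_sum, Pi.star_apply, Complex.mul_re, Complex.star_def,
    Complex.conj_re, Complex.conj_im]
  exact Finset.sum_congr rfl fun i _ => by ring

lemma posDef_smul {k : ℕ} {M : Matrix (Fin k) (Fin k) ℂ} (hM : M.PosDef) {c : ℝ} (hc : 0 < c) :
    ((c:ℂ) • M).PosDef := by
  refine ⟨?_, fun x hx => ?_⟩
  · rw [IsHermitian, conjTranspose_smul, hM.isHermitian.eq]
    simp
  · exact (hM.smul (a := (c:ℂ)) (by exact_mod_cast hc)).2 hx

lemma posSemidef_smul {k : ℕ} {M : Matrix (Fin k) (Fin k) ℂ} (hM : M.PosSemidef) {c : ℝ}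
    (hc : 0 ≤ c) : ((c:ℂ) • M).PosSemidef := by
  refine ⟨?_, fun x => ?_⟩
  · rw [IsHermitian, conjTranspose_smul, hM.isHermitian.eq]
    simp
  · exact (hM.smul (a := (c:ℂ)) (by exact_mod_cast hc)).2 x

lemma star_mulVec_dot {k : ℕ} {M : Matrix (Fin k) (Fin k) ℂ} (hM : M.IsHermitian)
    (v w : Fin k → ℂ) : star (M *ᵥ v) ⬝ᵥ w = star v ⬝ᵥ M *ᵥ w := by
  rw [star_mulVec, hM.eq, ← dotProduct_mulVec]

lemma key_inv_le {k : ℕ} {l : ℝ} (hl : 0 < l) {P C : Matrix (Fin k) (Fin k) ℂ}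
    (hP : P.PosDef) (hC : C.PosDef) (hB : (C - (l:ℂ) • P).PosSemidef) (y : Fin k → ℂ) :
    l * (star y ⬝ᵥ C⁻¹ *ᵥ y).re ≤ (star y ⬝ᵥ P⁻¹ *ᵥ y).re := by
  set z := C⁻¹ *ᵥ y with hz
  set q := P⁻¹ *ᵥ y with hq
  have hCz : C *ᵥ z = y := by
    rw [hz, mulVec_mulVec, mul_nonsing_inv _ hC.det_pos.ne'.isUnit, one_mulVec]
  have hPq : P *ᵥ q = y := by
    rw [hq, mulVec_mulVec, mul_nonsing_inv _ hP.det_pos.ne'.isUnit, one_mulVec]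
  set a := (star z ⬝ᵥ P *ᵥ z).re with ha
  set b := (star z ⬝ᵥ y).re with hb
  set c := (star y ⬝ᵥ q).re with hc
  have hyz : (star y ⬝ᵥ z).re = b := re_dot_comm y z
  have h1 : l * a ≤ b := by
    have := hB.re_dotProduct_nonneg z
    rw [RCLike.re_to_complex] at this
    rw [sub_mulVec, dotProduct_sub, smul_mulVec, dotProduct_smul, Complex.sub_re,
      smul_eq_mul, Complex.re_ofReal_mul, hCz] at this
    linarith
  set w := (l:ℂ) • z - q with hw
  have h2 : 0 ≤ (star w ⬝ᵥ P *ᵥ w).re := by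
    have := hP.posSemidef.re_dotProduct_nonneg w
    rwa [RCLike.re_to_complex] at this
  have hqPz : star q ⬝ᵥ P *ᵥ z = star y ⬝ᵥ z := by
    rw [← star_mulVec_dot hP.isHermitian, hPq]
  have hqy : star q ⬝ᵥ y = star y ⬝ᵥ q := by
    rw [hq, star_mulVec_dot hP.inv.isHermitian]
  have expand : star w ⬝ᵥ P *ᵥ w
      = (l:ℂ) * ((l:ℂ) * (star z ⬝ᵥ P *ᵥ z)) - (l:ℂ) * (star z ⬝ᵥ y)
        - (l:ℂ) * (star y ⬝ᵥ z) + star y ⬝ᵥ q := by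
    rw [hw]
    simp only [star_sub, star_smul, sub_dotProduct, smul_dotProduct, mulVec_sub, mulVec_smul,
      dotProduct_sub, dotProduct_smul, hPq, hqPz, hqy, smul_eq_mul, Complex.star_def,
      Complex.conj_ofReal]
    ring
  rw [expand] at h2
  simp only [Complex.add_re, Complex.sub_re, Complex.re_ofReal_mul] at h2
  rw [← ha, ← hb, hyz, ← hc] at h2
  have hfin : l * b ≤ c := by nlinarith
  have : star y ⬝ᵥ C⁻¹ *ᵥ y = star y ⬝ᵥ z := by rw [hz]
  rw [this, hyz]
  exact hfin

lemma re_star_dot_self {k : ℕ} (w : Fin k → ℂ) : (star w ⬝ᵥ w).re = ∑ i, ‖w i‖ ^ 2 := by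
  simp only [dotProduct, Complex.re_sum, Pi.star_apply, Complex.star_def]
  refine Finset.sum_congr rfl fun i _ => ?_
  rw [mul_comm, Complex.mul_conj, Complex.ofReal_re, Complex.sq_norm]

lemma eig_bound {k : ℕ} {M : Matrix (Fin k) (Fin k) ℂ} (hM : M.IsHermitian) (v : Fin k → ℂ) :
    (⨅ i : Fin k, hM.eigenvalues i) * (∑ i, ‖v i‖ ^ 2) ≤ (star v ⬝ᵥ M *ᵥ v).re := by
  rcases Nat.eq_zero_or_pos k with hk | hk
  · subst hk
    simp [dotProduct]
  haveI : Nonempty (Fin k) := ⟨⟨0, hk⟩⟩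
  set U : Matrix (Fin k) (Fin k) ℂ := (hM.eigenvectorUnitary : Matrix (Fin k) (Fin k) ℂ) with hU
  set w : Fin k → ℂ := (star U) *ᵥ v with hwdef
  have hsw : star w = star v ᵥ* U := by
    rw [hwdef, star_mulVec, star_eq_conjTranspose, conjTranspose_conjTranspose]
  have claim1 : star v ⬝ᵥ M *ᵥ v
      = star w ⬝ᵥ (diagonal (RCLike.ofReal ∘ hM.eigenvalues) : Matrix (Fin k) (Fin k) ℂ) *ᵥ w := by
    conv_lhs => rw [hM.spectral_theorem, Unitary.conjStarAlgAut_apply]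
    rw [← hU, ← mulVec_mulVec, ← mulVec_mulVec, dotProduct_mulVec, ← hsw, ← hwdef]
  have claim2 : (star w ⬝ᵥ w).re = (star v ⬝ᵥ v).re := by
    rw [hwdef, hsw, ← dotProduct_mulVec, mulVec_mulVec,
      (Matrix.mem_unitaryGroup_iff).mp hM.eigenvectorUnitary.2, one_mulVec]
  have claim3 : (star w ⬝ᵥ (diagonal (RCLike.ofReal ∘ hM.eigenvalues) :
        Matrix (Fin k) (Fin k) ℂ) *ᵥ w).re
      = ∑ i, hM.eigenvalues i * ‖w i‖ ^ 2 := by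
    simp only [dotProduct, Complex.re_sum, mulVec_diagonal, Pi.star_apply, Complex.star_def,
      Function.comp_apply]
    refine Finset.sum_congr rfl fun i _ => ?_
    have hco : (RCLike.ofReal (hM.eigenvalues i) : ℂ) = ((hM.eigenvalues i : ℝ) : ℂ) := rfl
    rw [hco]
    have : (starRingEnd ℂ) (w i) * ((hM.eigenvalues i : ℂ) * w i)
        = (hM.eigenvalues i : ℂ) * ((w i) * (starRingEnd ℂ) (w i)) := by ring
    rw [this, Complex.mul_conj, ← Complex.ofReal_mul, Complex.ofReal_re,
      Complex.sq_norm]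
  rw [claim1, claim3]
  have hnorm : ∑ i, ‖v i‖ ^ 2 = ∑ i, ‖w i‖ ^ 2 := by
    rw [← re_star_dot_self, ← re_star_dot_self, claim2]
  rw [hnorm, Finset.mul_sum]
  refine Finset.sum_le_sum fun i _ => ?_
  have hμ : (⨅ j : Fin k, hM.eigenvalues j) ≤ hM.eigenvalues i :=
    ciInf_le (Set.Finite.bddBelow (Set.finite_range _)) i
  have : (0:ℝ) ≤ ‖w i‖ ^ 2 := sq_nonneg _
  nlinarith

/-- Boundedness of the noise-free RLS error: for all `t`,
`x̃_tᴴ (Z₀⁻¹ + ∑_{i=1}^{t} A_iᴴ A_i) x̃_t ≤ W₀`, and `μ ‖x̃_t‖² ≤ W₀`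
where `μ` is the smallest eigenvalue of `Z₀⁻¹`; hence `‖x̃_t‖` is bounded. -/
theorem rls_error_bounded {m n : ℕ} (x : Fin m → ℂ)
    (A : ℕ → Matrix (Fin n) (Fin m) ℂ)
    (Z : ℕ → Matrix (Fin m) (Fin m) ℂ)
    (xhat : ℕ → (Fin m → ℂ))
    (l : ℝ) (hl0 : 0 < l) (hl1 : l ≤ 1)
    (hZ0 : (Z 0).PosDef)
    (hH : ((Z 0)⁻¹).IsHermitian)
    (hZ : ∀ t : ℕ, Z (t + 1) = ((l : ℂ) • (Z t)⁻¹ + (A (t + 1))ᴴ * A (t + 1))⁻¹)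
    (hx : ∀ t : ℕ, xhat (t + 1) = xhat t +
      (Z (t + 1) * (A (t + 1))ᴴ).mulVec ((A (t + 1)).mulVec x - (A (t + 1)).mulVec (xhat t))) :
    ∀ t : ℕ,
      (star (xhat t - x) ⬝ᵥ
          ((Z 0)⁻¹ + ∑ i ∈ Finset.range t, (A (i + 1))ᴴ * A (i + 1)).mulVec
            (xhat t - x)).re ≤
        (star (xhat 0 - x) ⬝ᵥ (Z 0)⁻¹.mulVec (xhat 0 - x)).re ∧
      (⨅ i : Fin m, hH.eigenvalues i) * (∑ i : Fin m, ‖(xhat t - x) i‖ ^ 2) ≤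
        (star (xhat 0 - x) ⬝ᵥ (Z 0)⁻¹.mulVec (xhat 0 - x)).re := by
  -- positivity of Z t
  have hPD : ∀ t, (Z t).PosDef := by
    intro t
    induction t with
    | zero => exact hZ0
    | succ t ih =>
      rw [hZ t]
      exact ((posDef_smul ih.inv hl0).add_posSemidef (posSemidef_conjTranspose_mul_self _)).inv
  have hCpos : ∀ t, ((l:ℂ) • (Z t)⁻¹ + (A (t+1))ᴴ * A (t+1)).PosDef := fun t =>
    (posDef_smul (hPD t).inv hl0).add_posSemidef (posSemidef_conjTranspose_mul_self _)
  have hZinv : ∀ t, (Z (t+1))⁻¹ = (l:ℂ) • (Z t)⁻¹ + (A (t+1))ᴴ * A (t+1) := fun t => by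
    rw [hZ t, nonsing_inv_nonsing_inv _ (hCpos t).det_pos.ne'.isUnit]
  -- error recursion
  have he : ∀ t, xhat (t+1) - x = (l:ℂ) • ((Z (t+1) * (Z t)⁻¹) *ᵥ (xhat t - x)) := by
    intro t
    have h1 : xhat (t+1) - x
        = (xhat t - x) - (Z (t+1) * ((A (t+1))ᴴ * A (t+1))) *ᵥ (xhat t - x) := by
      rw [hx t, ← mulVec_sub, mulVec_mulVec, ← Matrix.mul_assoc]
      have hxs : x - xhat t = -(xhat t - x) := by abel
      rw [hxs, mulVec_neg]
      abel
    have h2 : Z (t+1) * ((A (t+1))ᴴ * A (t+1))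
        = 1 - (l:ℂ) • (Z (t+1) * (Z t)⁻¹) := by
      have hb : (A (t+1))ᴴ * A (t+1) = (Z (t+1))⁻¹ - (l:ℂ) • (Z t)⁻¹ := by
        rw [hZinv t, add_sub_cancel_left]
      rw [hb, mul_sub, mul_nonsing_inv _ (hPD (t+1)).det_pos.ne'.isUnit, mul_smul_comm]
    rw [h1, h2, sub_mulVec, one_mulVec, smul_mulVec]
    abel
  -- W decreases geometrically
  have hWstep : ∀ t, (star (xhat (t+1) - x) ⬝ᵥ (Z (t+1))⁻¹ *ᵥ (xhat (t+1) - x)).re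
      ≤ l * (star (xhat t - x) ⬝ᵥ (Z t)⁻¹ *ᵥ (xhat t - x)).re := by
    intro t
    have hPpos : ((Z t)⁻¹).PosDef := (hPD t).inv
    have hCp : ((Z (t+1))⁻¹).PosDef := (hPD (t+1)).inv
    have hBps : ((Z (t+1))⁻¹ - (l:ℂ) • (Z t)⁻¹).PosSemidef := by
      rw [hZinv t, add_sub_cancel_left]
      exact posSemidef_conjTranspose_mul_self _
    set y := (Z t)⁻¹ *ᵥ (xhat t - x) with hy
    have hZC : ((Z (t+1))⁻¹)⁻¹ = Z (t+1) :=
      nonsing_inv_nonsing_inv _ (hPD (t+1)).det_pos.ne'.isUnit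
    have he' : xhat (t+1) - x = (l:ℂ) • (((Z (t+1))⁻¹)⁻¹ *ᵥ y) := by
      rw [he t, hy, ← mulVec_mulVec, hZC]
    have hs : (Z (t+1))⁻¹ *ᵥ (((Z (t+1))⁻¹)⁻¹ *ᵥ y) = y := by
      rw [mulVec_mulVec, mul_nonsing_inv _ hCp.det_pos.ne'.isUnit, one_mulVec]
    have hWt1 : (star (xhat (t+1) - x) ⬝ᵥ (Z (t+1))⁻¹ *ᵥ (xhat (t+1) - x)).re
        = l * (l * (star y ⬝ᵥ ((Z (t+1))⁻¹)⁻¹ *ᵥ y).re) := by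
      rw [he', star_smul, smul_dotProduct, mulVec_smul, dotProduct_smul, hs]
      simp only [smul_eq_mul, Complex.star_def, Complex.conj_ofReal]
      rw [Complex.re_ofReal_mul, Complex.re_ofReal_mul]
      congr 2
      exact re_dot_comm _ _
    have hkey := key_inv_le hl0 hPpos hCp hBps y
    have hyP : (star y ⬝ᵥ ((Z t)⁻¹)⁻¹ *ᵥ y).re
        = (star (xhat t - x) ⬝ᵥ (Z t)⁻¹ *ᵥ (xhat t - x)).re := by
      rw [hy, mulVec_mulVec, nonsing_inv_mul _ hPpos.det_pos.ne'.isUnit, one_mulVec,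
        star_mulVec_dot hPpos.isHermitian]
    rw [hWt1]
    rw [hyP] at hkey
    exact mul_le_mul_of_nonneg_left hkey hl0.le
  have hWgeo : ∀ t, (star (xhat t - x) ⬝ᵥ (Z t)⁻¹ *ᵥ (xhat t - x)).re
      ≤ l ^ t * (star (xhat 0 - x) ⬝ᵥ (Z 0)⁻¹ *ᵥ (xhat 0 - x)).re := by
    intro t
    induction t with
    | zero => simp
    | succ t ih =>
      calc (star (xhat (t+1) - x) ⬝ᵥ (Z (t+1))⁻¹ *ᵥ (xhat (t+1) - x)).re
          ≤ l * (star (xhat t - x) ⬝ᵥ (Z t)⁻¹ *ᵥ (xhat t - x)).re := hWstep t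
        _ ≤ l * (l ^ t * (star (xhat 0 - x) ⬝ᵥ (Z 0)⁻¹ *ᵥ (xhat 0 - x)).re) :=
            mul_le_mul_of_nonneg_left ih hl0.le
        _ = l ^ (t+1) * (star (xhat 0 - x) ⬝ᵥ (Z 0)⁻¹ *ᵥ (xhat 0 - x)).re := by ring
  -- PSD lower bound on Z t ⁻¹
  have hSps : ∀ t, ((Z t)⁻¹ - ((l ^ t : ℝ) : ℂ) •
      ((Z 0)⁻¹ + ∑ i ∈ Finset.range t, (A (i + 1))ᴴ * A (i + 1))).PosSemidef := by
    intro t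
    induction t with
    | zero =>
      have h0 : (Z 0)⁻¹ - ((l ^ 0 : ℝ) : ℂ) •
          ((Z 0)⁻¹ + ∑ i ∈ Finset.range 0, (A (i + 1))ᴴ * A (i + 1)) = 0 := by
        simp
      rw [h0]
      exact PosSemidef.zero
    | succ t ih =>
      have hid : (Z (t+1))⁻¹ - ((l ^ (t+1) : ℝ) : ℂ) •
            ((Z 0)⁻¹ + ∑ i ∈ Finset.range (t+1), (A (i + 1))ᴴ * A (i + 1))
          = (l:ℂ) • ((Z t)⁻¹ - ((l ^ t : ℝ) : ℂ) •
              ((Z 0)⁻¹ + ∑ i ∈ Finset.range t, (A (i + 1))ᴴ * A (i + 1)))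
            + (((1 - l ^ (t+1) : ℝ)) : ℂ) • ((A (t+1))ᴴ * A (t+1)) := by
        rw [hZinv t, Finset.sum_range_succ]
        push_cast
        module
      rw [hid]
      exact (posSemidef_smul ih hl0.le).add
        (posSemidef_smul (posSemidef_conjTranspose_mul_self _)
          (by nlinarith [pow_le_one₀ hl0.le hl1 (n := t+1)]))
  have hsumps : ∀ t, (∑ i ∈ Finset.range t, (A (i + 1))ᴴ * A (i + 1)).PosSemidef := by
    intro t
    induction t with
    | zero => simpa using (PosSemidef.zero (n := Fin m) (R := ℂ))
    | succ t ih =>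
      rw [Finset.sum_range_succ]
      exact ih.add (posSemidef_conjTranspose_mul_self _)
  -- conclusion
  intro t
  have hSle : (star (xhat t - x) ⬝ᵥ
        ((Z 0)⁻¹ + ∑ i ∈ Finset.range t, (A (i + 1))ᴴ * A (i + 1)) *ᵥ (xhat t - x)).re
      ≤ (star (xhat 0 - x) ⬝ᵥ (Z 0)⁻¹ *ᵥ (xhat 0 - x)).re := by
    have h0 := (hSps t).re_dotProduct_nonneg (xhat t - x)
    rw [RCLike.re_to_complex, sub_mulVec, dotProduct_sub, smul_mulVec, dotProduct_smul,
      Complex.sub_re, smul_eq_mul, Complex.re_ofReal_mul] at h0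
    have hgeo := hWgeo t
    have hlt : (0:ℝ) < l ^ t := pow_pos hl0 t
    nlinarith
  have hZ0le : (star (xhat t - x) ⬝ᵥ (Z 0)⁻¹ *ᵥ (xhat t - x)).re
      ≤ (star (xhat t - x) ⬝ᵥ
        ((Z 0)⁻¹ + ∑ i ∈ Finset.range t, (A (i + 1))ᴴ * A (i + 1)) *ᵥ (xhat t - x)).re := by
    have h0 := (hsumps t).re_dotProduct_nonneg (xhat t - x)
    rw [RCLike.re_to_complex] at h0
    rw [add_mulVec, dotProduct_add, Complex.add_re]
    linarith
  refine ⟨hSle, ?_⟩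
  calc (⨅ i : Fin m, hH.eigenvalues i) * (∑ i : Fin m, ‖(xhat t - x) i‖ ^ 2)
      ≤ (star (xhat t - x) ⬝ᵥ (Z 0)⁻¹ *ᵥ (xhat t - x)).re := eig_bound hH (xhat t - x)
    _ ≤ (star (xhat t - x) ⬝ᵥ
          ((Z 0)⁻¹ + ∑ i ∈ Finset.range t, (A (i + 1))ᴴ * A (i + 1)) *ᵥ (xhat t - x)).re := hZ0le
    _ ≤ (star (xhat 0 - x) ⬝ᵥ (Z 0)⁻¹ *ᵥ (xhat 0 - x)).re := hSle
end
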